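/- Let H be an involutory Hopf algebra over a field k (S² = id). Then the linear map μ: H ⊗ H ⊗ H → H induced by x ⊗ y ⊗ z ↦ x·S(y)·z satisfies the type 1 para-associativity μ(μ(x⊗y⊗z)⊗u⊗v) = μ(x⊗μ(u⊗z⊗y)⊗v) and the degeneracy conditions μ(x ⊗ y⁽¹⁾ ⊗ y⁽²⁾) = ε(y)x and μ(x⁽¹⁾ ⊗ x⁽²⁾ ⊗ y) = ε(x)y (where Δ(y) = y⁽¹⁾ ⊗ y⁽²⁾ in Sweedler notation). -/

import Mathlib

open Coalgebra HopfAlgebra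

section AuxHopf
open TensorProduct
variable {k : Type*} [CommSemiring k] {H : Type*} [Semiring H] [HopfAlgebra k H]

noncomputable def mulRepr {ι κ : Type*} {a b : H} (r : Coalgebra.Repr k a ι) (s : Coalgebra.Repr k b κ) :
    Coalgebra.Repr k (a * b) (ι × κ) where
  index := r.index ×ˢ s.index
  left p := r.left p.1 * s.left p.2
  right p := r.right p.1 * s.right p.2
  eq := by
    rw [Finset.sum_product]
    rw [Bialgebra.comul_mul, ← r.eq, ← s.eq, Finset.sum_mul_sum]
    simp [Algebra.TensorProduct.tmul_mul_tmul]

lemma repr_counit_right {ι : Type*} {a : H} (r : Coalgebra.Repr k a ι) :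
    ∑ i ∈ r.index, counit (R := k) (r.right i) • r.left i = a := by
  have h2 := congrArg (TensorProduct.rid k H) (Coalgebra.sum_tmul_counit_eq (R := k) r)
  simp only [map_sum, TensorProduct.rid_tmul, one_smul] at h2
  exact h2

lemma repr_counit_left {ι : Type*} {a : H} (r : Coalgebra.Repr k a ι) :
    ∑ i ∈ r.index, counit (R := k) (r.left i) • r.right i = a := by
  have h2 := congrArg (TensorProduct.lid k H) (Coalgebra.sum_counit_tmul_eq (R := k) r)
  simp only [map_sum, TensorProduct.lid_tmul, one_smul] at h2
  exact h2

variable (k H) in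
noncomputable def thetaMap :
    ((H ⊗[k] (H ⊗[k] H)) ⊗[k] (H ⊗[k] (H ⊗[k] H))) →ₗ[k] H :=
  LinearMap.mul' k H ∘ₗ
  (LinearMap.mul' k H).lTensor H ∘ₗ
  TensorProduct.map
    (LinearMap.mul' k H ∘ₗ TensorProduct.map (antipode (R := k)) (antipode (R := k)) ∘ₗ
      (TensorProduct.comm k H H).toLinearMap)
    (TensorProduct.map (LinearMap.mul' k H) (antipode (R := k) ∘ₗ LinearMap.mul' k H)) ∘ₗ
  ((TensorProduct.tensorTensorTensorComm k H H H H).toLinearMap.lTensor (H ⊗[k] H)) ∘ₗ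
  (TensorProduct.tensorTensorTensorComm k H (H ⊗[k] H) H (H ⊗[k] H)).toLinearMap

lemma thetaMap_tmul (x y z u v w : H) :
    thetaMap k H ((x ⊗ₜ (y ⊗ₜ z)) ⊗ₜ (u ⊗ₜ (v ⊗ₜ w))) =
      antipode (R := k) u * antipode (R := k) x * (y * v) * antipode (R := k) (z * w) := by
  simp [thetaMap, mul_assoc]

lemma smul_mul_swap (α β : k) (X Y : H) : (α * β) • (X * Y) = (β • X) * (α • Y) := by
  rw [smul_mul_assoc, mul_smul_comm, smul_smul, mul_comm β α]

lemma thetaA {ι κ ι' κ' : Type*} {a b : H} (ra : Coalgebra.Repr k a ι) (rb : Coalgebra.Repr k b κ)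
    (ra2 : ∀ i, Coalgebra.Repr k (ra.right i) ι') (rb2 : ∀ j, Coalgebra.Repr k (rb.right j) κ') :
    thetaMap k H ((∑ i ∈ ra.index, ∑ p ∈ (ra2 i).index,
        ra.left i ⊗ₜ[k] ((ra2 i).left p ⊗ₜ[k] (ra2 i).right p)) ⊗ₜ[k]
      (∑ j ∈ rb.index, ∑ q ∈ (rb2 j).index,
        rb.left j ⊗ₜ[k] ((rb2 j).left q ⊗ₜ[k] (rb2 j).right q))) =
    antipode (R := k) b * antipode (R := k) a := by
  simp only [TensorProduct.sum_tmul, TensorProduct.tmul_sum, map_sum, thetaMap_tmul]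
  calc
    ∑ j ∈ rb.index, ∑ q ∈ (rb2 j).index, ∑ i ∈ ra.index, ∑ p ∈ (ra2 i).index,
        antipode (R := k) (rb.left j) * antipode (R := k) (ra.left i) *
          ((ra2 i).left p * (rb2 j).left q) *
          antipode (R := k) ((ra2 i).right p * (rb2 j).right q)
      = ∑ j ∈ rb.index, ∑ i ∈ ra.index, ∑ q ∈ (rb2 j).index, ∑ p ∈ (ra2 i).index,
        antipode (R := k) (rb.left j) * antipode (R := k) (ra.left i) *
          ((ra2 i).left p * (rb2 j).left q) *
          antipode (R := k) ((ra2 i).right p * (rb2 j).right q) :=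
      Finset.sum_congr rfl fun j _ => Finset.sum_comm
    _ = ∑ j ∈ rb.index, ∑ i ∈ ra.index,
        (counit (R := k) (ra.right i) * counit (R := k) (rb.right j)) •
          (antipode (R := k) (rb.left j) * antipode (R := k) (ra.left i)) := by
      refine Finset.sum_congr rfl fun j _ => Finset.sum_congr rfl fun i _ => ?_
      have hprod := HopfAlgebra.sum_mul_antipode_eq_smul (R := k) (mulRepr (ra2 i) (rb2 j))
      simp only [mulRepr] at hprod
      rw [Finset.sum_product] at hprod
      rw [Finset.sum_comm] at hprod
      calc
        ∑ q ∈ (rb2 j).index, ∑ p ∈ (ra2 i).index,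
            antipode (R := k) (rb.left j) * antipode (R := k) (ra.left i) *
              ((ra2 i).left p * (rb2 j).left q) *
              antipode (R := k) ((ra2 i).right p * (rb2 j).right q)
          = antipode (R := k) (rb.left j) * antipode (R := k) (ra.left i) *
            ∑ q ∈ (rb2 j).index, ∑ p ∈ (ra2 i).index,
              ((ra2 i).left p * (rb2 j).left q) *
                antipode (R := k) ((ra2 i).right p * (rb2 j).right q) := by
          simp only [Finset.mul_sum, mul_assoc]
        _ = antipode (R := k) (rb.left j) * antipode (R := k) (ra.left i) *
            (counit (R := k) (ra.right i * rb.right j) • (1 : H)) := by rw [hprod]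
        _ = (counit (R := k) (ra.right i) * counit (R := k) (rb.right j)) •
            (antipode (R := k) (rb.left j) * antipode (R := k) (ra.left i)) := by
          rw [Bialgebra.counit_mul, mul_smul_comm, mul_one]
    _ = ∑ j ∈ rb.index, ∑ i ∈ ra.index,
        (counit (R := k) (rb.right j) • antipode (R := k) (rb.left j)) *
          (counit (R := k) (ra.right i) • antipode (R := k) (ra.left i)) := by
      refine Finset.sum_congr rfl fun j _ => Finset.sum_congr rfl fun i _ => ?_
      rw [smul_mul_swap]
    _ = (∑ j ∈ rb.index, counit (R := k) (rb.right j) • antipode (R := k) (rb.left j)) *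
        (∑ i ∈ ra.index, counit (R := k) (ra.right i) • antipode (R := k) (ra.left i)) := by
      rw [Finset.sum_mul]
      refine Finset.sum_congr rfl fun j _ => ?_
      rw [Finset.mul_sum]
    _ = antipode (R := k) b * antipode (R := k) a := by
      rw [show (∑ j ∈ rb.index, counit (R := k) (rb.right j) • antipode (R := k) (rb.left j))
            = antipode (R := k) b by
          simp only [← map_smul, ← map_sum, repr_counit_right],
        show (∑ i ∈ ra.index, counit (R := k) (ra.right i) • antipode (R := k) (ra.left i))
            = antipode (R := k) a by
          simp only [← map_smul, ← map_sum, repr_counit_right]]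

lemma smul_mul_swap' (α β : k) (X Y : H) : (α * β) • (X * Y) = (α • X) * (β • Y) := by
  rw [mul_comm α β, smul_mul_swap]

lemma thetaB {ι κ ι' κ' : Type*} {a b : H} (ra : Coalgebra.Repr k a ι) (rb : Coalgebra.Repr k b κ)
    (ra1 : ∀ i, Coalgebra.Repr k (ra.left i) ι') (rb1 : ∀ j, Coalgebra.Repr k (rb.left j) κ') :
    thetaMap k H ((∑ i ∈ ra.index, ∑ p ∈ (ra1 i).index,
        (ra1 i).left p ⊗ₜ[k] ((ra1 i).right p ⊗ₜ[k] ra.right i)) ⊗ₜ[k]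
      (∑ j ∈ rb.index, ∑ q ∈ (rb1 j).index,
        (rb1 j).left q ⊗ₜ[k] ((rb1 j).right q ⊗ₜ[k] rb.right j))) =
    antipode (R := k) (a * b) := by
  simp only [TensorProduct.sum_tmul, TensorProduct.tmul_sum, map_sum, thetaMap_tmul]
  calc
    ∑ j ∈ rb.index, ∑ q ∈ (rb1 j).index, ∑ i ∈ ra.index, ∑ p ∈ (ra1 i).index,
        antipode (R := k) ((rb1 j).left q) * antipode (R := k) ((ra1 i).left p) *
          ((ra1 i).right p * (rb1 j).right q) *
          antipode (R := k) (ra.right i * rb.right j)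
      = ∑ j ∈ rb.index, ∑ i ∈ ra.index, ∑ q ∈ (rb1 j).index, ∑ p ∈ (ra1 i).index,
        antipode (R := k) ((rb1 j).left q) * antipode (R := k) ((ra1 i).left p) *
          ((ra1 i).right p * (rb1 j).right q) *
          antipode (R := k) (ra.right i * rb.right j) :=
      Finset.sum_congr rfl fun j _ => Finset.sum_comm
    _ = ∑ j ∈ rb.index, ∑ i ∈ ra.index,
        (counit (R := k) (ra.left i) * counit (R := k) (rb.left j)) •
          (antipode (R := k) (ra.right i * rb.right j)) := by
      refine Finset.sum_congr rfl fun j _ => Finset.sum_congr rfl fun i _ => ?_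
      have h1 := HopfAlgebra.sum_antipode_mul_eq_smul (R := k) (ra1 i)
      have h2 := HopfAlgebra.sum_antipode_mul_eq_smul (R := k) (rb1 j)
      calc
        ∑ q ∈ (rb1 j).index, ∑ p ∈ (ra1 i).index,
            antipode (R := k) ((rb1 j).left q) * antipode (R := k) ((ra1 i).left p) *
              ((ra1 i).right p * (rb1 j).right q) *
              antipode (R := k) (ra.right i * rb.right j)
          = ∑ q ∈ (rb1 j).index, counit (R := k) (ra.left i) •
              (antipode (R := k) ((rb1 j).left q) * ((rb1 j).right q *
                antipode (R := k) (ra.right i * rb.right j))) := by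
          refine Finset.sum_congr rfl fun q _ => ?_
          calc
            ∑ p ∈ (ra1 i).index,
                antipode (R := k) ((rb1 j).left q) * antipode (R := k) ((ra1 i).left p) *
                  ((ra1 i).right p * (rb1 j).right q) *
                  antipode (R := k) (ra.right i * rb.right j)
              = antipode (R := k) ((rb1 j).left q) *
                ((∑ p ∈ (ra1 i).index,
                    antipode (R := k) ((ra1 i).left p) * (ra1 i).right p) *
                  ((rb1 j).right q * antipode (R := k) (ra.right i * rb.right j))) := by
                rw [Finset.sum_mul, Finset.mul_sum]
                exact Finset.sum_congr rfl fun p _ => by simp only [mul_assoc]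
            _ = counit (R := k) (ra.left i) •
                (antipode (R := k) ((rb1 j).left q) * ((rb1 j).right q *
                  antipode (R := k) (ra.right i * rb.right j))) := by
                rw [h1, smul_mul_assoc, one_mul, mul_smul_comm]
        _ = counit (R := k) (ra.left i) •
            ((∑ q ∈ (rb1 j).index,
                antipode (R := k) ((rb1 j).left q) * (rb1 j).right q) *
              antipode (R := k) (ra.right i * rb.right j)) := by
          rw [← Finset.smul_sum, Finset.sum_mul]
          congr 1
          exact Finset.sum_congr rfl fun q _ => by rw [mul_assoc]
        _ = (counit (R := k) (ra.left i) * counit (R := k) (rb.left j)) •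
            (antipode (R := k) (ra.right i * rb.right j)) := by
          rw [h2, smul_mul_assoc, one_mul, smul_smul]
    _ = antipode (R := k) (∑ j ∈ rb.index, ∑ i ∈ ra.index,
          (counit (R := k) (ra.left i) • ra.right i) *
            (counit (R := k) (rb.left j) • rb.right j)) := by
      rw [map_sum]
      refine Finset.sum_congr rfl fun j _ => ?_
      rw [map_sum]
      refine Finset.sum_congr rfl fun i _ => ?_
      rw [← smul_mul_swap', map_smul]
    _ = antipode (R := k) (a * b) := by
      congr 1
      calc
        ∑ j ∈ rb.index, ∑ i ∈ ra.index,
            (counit (R := k) (ra.left i) • ra.right i) *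
              (counit (R := k) (rb.left j) • rb.right j)
          = (∑ i ∈ ra.index, counit (R := k) (ra.left i) • ra.right i) *
            (∑ j ∈ rb.index, counit (R := k) (rb.left j) • rb.right j) := by
          rw [Finset.sum_comm, Finset.sum_mul]
          exact Finset.sum_congr rfl fun i _ => by rw [Finset.mul_sum]
        _ = a * b := by rw [repr_counit_left, repr_counit_left]

theorem antipode_mul' (a b : H) :
    antipode (R := k) (a * b) = antipode (R := k) b * antipode (R := k) a := by
  let ra := Coalgebra.Repr.arbitrary k a
  let rb := Coalgebra.Repr.arbitrary k b
  let ra1 : ∀ i, Coalgebra.Repr k (ra.left i) (H × H) := fun i => Coalgebra.Repr.arbitrary k _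
  let ra2 : ∀ i, Coalgebra.Repr k (ra.right i) (H × H) := fun i => Coalgebra.Repr.arbitrary k _
  let rb1 : ∀ j, Coalgebra.Repr k (rb.left j) (H × H) := fun j => Coalgebra.Repr.arbitrary k _
  let rb2 : ∀ j, Coalgebra.Repr k (rb.right j) (H × H) := fun j => Coalgebra.Repr.arbitrary k _
  have ha := Coalgebra.sum_tmul_tmul_eq ra ra1 ra2
  have hb := Coalgebra.sum_tmul_tmul_eq rb rb1 rb2
  have key := congrArg (thetaMap k H)
    (congrArg₂ (· ⊗ₜ[k] ·) ha hb)
  rw [thetaB ra rb ra1 rb1, thetaA ra rb ra2 rb2] at key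
  exact key

end AuxHopf

/-- For an involutory Hopf algebra `H` over a field `k`, the ternary operation
`μ(x ⊗ y ⊗ z) = x · S(y) · z` satisfies type 1 para-associativity and the two
degeneracy conditions (expressed via representations of the comultiplication,
i.e. Sweedler notation). -/
theorem involutory_hopf_heap_axioms (k : Type*) [Field k] (H : Type*)
    [Ring H] [HopfAlgebra k H]
    (hS : ∀ a : H, antipode (R := k) (antipode (R := k) a) = a) :
    let μ : H → H → H → H := fun x y z => x * antipode (R := k) y * z
    (∀ x y z u v : H, μ (μ x y z) u v = μ x (μ u z y) v) ∧
    (∀ x y : H, ∀ (ι : Type*) (r : Coalgebra.Repr k y ι),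
      ∑ i ∈ r.index, μ x (r.left i) (r.right i) = counit (R := k) y • x) ∧
    (∀ x y : H, ∀ (ι : Type*) (r : Coalgebra.Repr k x ι),
      ∑ i ∈ r.index, μ (r.left i) (r.right i) y = counit (R := k) x • y) := by
  intro μ
  refine ⟨fun x y z u v => ?_, fun x y ι r => ?_, fun x y ι r => ?_⟩
  · show x * antipode (R := k) y * z * antipode (R := k) u * v
        = x * antipode (R := k) (u * antipode (R := k) z * y) * v
    rw [antipode_mul', antipode_mul', hS]
    simp only [mul_assoc]
  · show ∑ i ∈ r.index, x * antipode (R := k) (r.left i) * r.right i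
        = counit (R := k) y • x
    calc
      ∑ i ∈ r.index, x * antipode (R := k) (r.left i) * r.right i
        = x * ∑ i ∈ r.index, antipode (R := k) (r.left i) * r.right i := by
          rw [Finset.mul_sum]
          exact Finset.sum_congr rfl fun i _ => by rw [mul_assoc]
      _ = counit (R := k) y • x := by
          rw [HopfAlgebra.sum_antipode_mul_eq_smul r, mul_smul_comm, mul_one]
  · show ∑ i ∈ r.index, r.left i * antipode (R := k) (r.right i) * y
        = counit (R := k) x • y
    calc
      ∑ i ∈ r.index, r.left i * antipode (R := k) (r.right i) * y
        = (∑ i ∈ r.index, r.left i * antipode (R := k) (r.right i)) * y := by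
          rw [Finset.sum_mul]
      _ = counit (R := k) x • y := by
          rw [HopfAlgebra.sum_mul_antipode_eq_smul r, smul_mul_assoc, one_mul]
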